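/- arXiv:1401.4363 — 2 statements merged into one kernel-verified Lean document; each statement's English description precedes it below -/
import Mathlib

section
/- Let k ≥ 3 and let H be a graph with minimum degree δ(H) ≥ k − 1 that contains no path P_{2k} and is a subgraph of S_{h,k−1} spanning all h vertices, with independent set I of size h − (k−1) and clique side J of size k − 1. Then every vertex of I is adjacent to every vertex of J, and for any two vertices of I there exists a path on 2k − 1 vertices in H having them as endpoints. -/
open Finset

def Snk (n k : ℕ) : SimpleGraph (Fin n) where
  Adj i j := i ≠ j ∧ (i.val < k ∨ j.val < k)
  symm := ⟨fun i j h => ⟨h.1.symm, h.2.symm⟩⟩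
  loopless := ⟨fun i h => h.1 rfl⟩

instance SnkDec (n k : ℕ) : DecidableRel (Snk n k).Adj :=
  fun i j => inferInstanceAs (Decidable (i ≠ j ∧ (i.val < k ∨ j.val < k)))

def signlessLaplacian {n : ℕ} (G : SimpleGraph (Fin n)) [DecidableRel G.Adj] :
    Matrix (Fin n) (Fin n) ℝ :=
  Matrix.diagonal (fun i => (G.degree i : ℝ)) + G.adjMatrix ℝ

noncomputable def qIndex {n : ℕ} (G : SimpleGraph (Fin n)) [DecidableRel G.Adj] : ℝ :=
  sSup (spectrum ℝ (signlessLaplacian G))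

def HasPathOn {V : Type*} (G : SimpleGraph V) (m : ℕ) : Prop :=
  ∃ f : Fin m → V, Function.Injective f ∧
    ∀ (i : ℕ) (h : i + 1 < m), G.Adj (f ⟨i, by omega⟩) (f ⟨i + 1, h⟩)

def HasCycleOn {V : Type*} (G : SimpleGraph V) (m : ℕ) : Prop :=
  ∃ f : ZMod m → V, Function.Injective f ∧ ∀ i, G.Adj (f i) (f (i + 1))

theorem stmt18 {h k : ℕ} (hk : 3 ≤ k) (hh : 2 * k - 1 ≤ h) (H : SimpleGraph (Fin h))
    [DecidableRel H.Adj] (J : Finset (Fin h)) (hJ : J.card = k - 1)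
    (hIind : ∀ a b : Fin h, a ∉ J → b ∉ J → ¬ H.Adj a b)
    (hδ : ∀ v, k - 1 ≤ H.degree v)
    (hP : ¬ HasPathOn H (2 * k)) :
    (∀ a ∉ J, ∀ b ∈ J, H.Adj a b) ∧
      ∀ a b : Fin h, a ∉ J → b ∉ J → a ≠ b →
        ∃ f : Fin (2 * k - 1) → Fin h, Function.Injective f ∧
          (∀ (i : ℕ) (hi : i + 1 < 2 * k - 1), H.Adj (f ⟨i, by omega⟩) (f ⟨i + 1, hi⟩)) ∧
          f ⟨0, by omega⟩ = a ∧ f ⟨2 * k - 2, by omega⟩ = b := by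
  have part1 : ∀ a ∉ J, ∀ b ∈ J, H.Adj a b := by
    intro a ha b hb
    by_contra hadj
    have hsub : H.neighborFinset a ⊆ J.erase b := by
      intro c hc
      rw [SimpleGraph.mem_neighborFinset] at hc
      have hcJ : c ∈ J := by
        by_contra hcJ
        exact hIind a c ha hcJ hc
      exact Finset.mem_erase.mpr ⟨fun hcb => hadj (hcb ▸ hc), hcJ⟩
    have h1 := Finset.card_le_card hsub
    rw [Finset.card_erase_of_mem hb, hJ] at h1
    have h2 := hδ a
    rw [← SimpleGraph.card_neighborFinset_eq_degree] at h2
    omega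
  refine ⟨part1, ?_⟩
  intro a b ha hb hab
  have haS : a ∈ (Finset.univ \ J) := Finset.mem_sdiff.mpr ⟨Finset.mem_univ a, ha⟩
  have hbS : b ∈ ((Finset.univ \ J).erase a) :=
    Finset.mem_erase.mpr ⟨hab.symm, Finset.mem_sdiff.mpr ⟨Finset.mem_univ b, hb⟩⟩
  have hScard : k - 2 ≤ (((Finset.univ \ J).erase a).erase b).card := by
    rw [Finset.card_erase_of_mem hbS, Finset.card_erase_of_mem haS,
      Finset.card_sdiff_of_subset (Finset.subset_univ J), hJ, Finset.card_univ, Fintype.card_fin]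
    omega
  obtain ⟨T, hTsub, hTcard⟩ := Finset.exists_subset_card_eq hScard
  have hk1 : 0 < k - 1 := by omega
  have hk2 : 0 < k - 2 := by omega
  have hg0J : ∀ i, ((J.orderIsoOfFin hJ i : Fin h)) ∈ J := fun i => (J.orderIsoOfFin hJ i).2
  have hg0inj : ∀ i j : Fin (k-1),
      (J.orderIsoOfFin hJ i : Fin h) = (J.orderIsoOfFin hJ j : Fin h) → i = j :=
    fun i j hij => (J.orderIsoOfFin hJ).injective (Subtype.ext hij)
  have he0T : ∀ i, ((T.orderIsoOfFin hTcard i : Fin h)) ∈ T := fun i => (T.orderIsoOfFin hTcard i).2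
  have he0inj : ∀ i j : Fin (k-2),
      (T.orderIsoOfFin hTcard i : Fin h) = (T.orderIsoOfFin hTcard j : Fin h) → i = j :=
    fun i j hij => (T.orderIsoOfFin hTcard).injective (Subtype.ext hij)
  set g' : ℕ → Fin h := fun m => (J.orderIsoOfFin hJ ⟨m % (k-1), Nat.mod_lt _ hk1⟩ : Fin h) with hg'
  set e' : ℕ → Fin h := fun m => (T.orderIsoOfFin hTcard ⟨m % (k-2), Nat.mod_lt _ hk2⟩ : Fin h) with he'
  have hg'J : ∀ m, g' m ∈ J := fun m => hg0J _
  have hg'inj : ∀ m m', m < k-1 → m' < k-1 → g' m = g' m' → m = m' := by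
    intro m m' hm hm' heq
    have h1 := congrArg Fin.val (hg0inj _ _ heq)
    simpa [Nat.mod_eq_of_lt hm, Nat.mod_eq_of_lt hm'] using h1
  have he'mem : ∀ m, e' m ∉ J ∧ e' m ≠ a ∧ e' m ≠ b := by
    intro m
    have hT := hTsub (he0T ⟨m % (k-2), Nat.mod_lt _ hk2⟩)
    have hb' := Finset.mem_erase.mp hT
    have ha' := Finset.mem_erase.mp hb'.2
    have hj' := Finset.mem_sdiff.mp ha'.2
    exact ⟨hj'.2, ha'.1, hb'.1⟩
  have he'inj : ∀ m m', m < k-2 → m' < k-2 → e' m = e' m' → m = m' := by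
    intro m m' hm hm' heq
    have h1 := congrArg Fin.val (he0inj _ _ heq)
    simpa [Nat.mod_eq_of_lt hm, Nat.mod_eq_of_lt hm'] using h1
  set F : ℕ → Fin h := fun m =>
    if m = 0 then a else if m = 2*k-2 then b
    else if m % 2 = 1 then g' (m/2) else e' (m/2 - 1) with hF
  have hF0 : F 0 = a := by simp [hF]
  have hFlast : F (2*k-2) = b := by
    have h0 : 2*k-2 ≠ 0 := by omega
    simp [hF, h0]
  have hFodd : ∀ m, m % 2 = 1 → F m = g' (m/2) := by
    intro m hm
    have h1 : m ≠ 0 := by omega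
    have h2 : m ≠ 2*k-2 := by omega
    simp [hF, h1, h2, hm]
  have hFeven : ∀ m, m % 2 = 0 → m ≠ 0 → m ≠ 2*k-2 → F m = e' (m/2-1) := by
    intro m hm h1 h2
    simp [hF, h1, h2, hm]
  have hFJ : ∀ m, m < 2*k-1 → (F m ∈ J ↔ m % 2 = 1) := by
    intro m hm
    rcases eq_or_ne m 0 with rfl | h0
    · rw [hF0]; simp [ha]
    rcases eq_or_ne m (2*k-2) with rfl | hL
    · rw [hFlast]
      constructor
      · intro hmem; exact absurd hmem hb
      · intro hp; omega
    rcases eq_or_ne (m % 2) 1 with hp | hp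
    · rw [hFodd m hp]; simp [hg'J, hp]
    · have hp0 : m % 2 = 0 := by omega
      rw [hFeven m hp0 h0 hL]
      simp [(he'mem _).1, hp0]
  refine ⟨fun i => F i.val, ?_, ?_, hF0, hFlast⟩
  · intro i j hij
    apply Fin.ext
    change F i.val = F j.val at hij
    set m := i.val with hmdef
    set m' := j.val with hm'def
    have hm : m < 2*k-1 := i.isLt
    have hm' : m' < 2*k-1 := j.isLt
    have h1 := hFJ m hm
    have h2 := hFJ m' hm'
    rw [hij] at h1
    have hiff : m % 2 = 1 ↔ m' % 2 = 1 := h1.symm.trans h2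
    rcases eq_or_ne (m % 2) 1 with hp | hp
    · have hp' : m' % 2 = 1 := hiff.mp hp
      rw [hFodd m hp, hFodd m' hp'] at hij
      have := hg'inj _ _ (by omega) (by omega) hij
      omega
    · have hp' : m' % 2 ≠ 1 := fun hq => hp (hiff.mpr hq)
      have hp0 : m % 2 = 0 := by omega
      have hp0' : m' % 2 = 0 := by omega
      rcases eq_or_ne m 0 with h0 | h0 <;> rcases eq_or_ne m' 0 with h0' | h0'
      · omega
      · rcases eq_or_ne m' (2*k-2) with hL' | hL'
        · rw [h0, hL', hF0, hFlast] at hij; exact absurd hij hab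
        · rw [h0, hF0, hFeven m' hp0' h0' hL'] at hij
          exact absurd hij.symm (he'mem _).2.1
      · rcases eq_or_ne m (2*k-2) with hL | hL
        · rw [h0', hL, hF0, hFlast] at hij; exact absurd hij.symm hab
        · rw [h0', hF0, hFeven m hp0 h0 hL] at hij
          exact absurd hij (he'mem _).2.1
      · rcases eq_or_ne m (2*k-2) with hL | hL <;> rcases eq_or_ne m' (2*k-2) with hL' | hL'
        · omega
        · rw [hL, hFlast, hFeven m' hp0' h0' hL'] at hij
          exact absurd hij.symm (he'mem _).2.2
        · rw [hL', hFlast, hFeven m hp0 h0 hL] at hij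
          exact absurd hij (he'mem _).2.2
        · rw [hFeven m hp0 h0 hL, hFeven m' hp0' h0' hL'] at hij
          have := he'inj _ _ (by omega) (by omega) hij
          omega
  · intro i hi
    show H.Adj (F i) (F (i+1))
    have h1 : i < 2*k-1 := by omega
    rcases eq_or_ne (i % 2) 1 with hp | hp
    · have hJ1 : F i ∈ J := (hFJ i h1).mpr hp
      have hJ2 : F (i+1) ∉ J := fun hc => by
        have := (hFJ (i+1) hi).mp hc; omega
      exact (part1 _ hJ2 _ hJ1).symm
    · have hJ1 : F i ∉ J := fun hc => by
        have := (hFJ i h1).mp hc; omega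
      have hJ2 : F (i+1) ∈ J := (hFJ (i+1) hi).mpr (by omega)
      exact part1 _ hJ1 _ hJ2
end

section
/- Let k ≥ 3 and suppose G is a graph whose components F_1, …, F_t each satisfy: F_i contains an induced subgraph H_i isomorphic to a spanning subgraph of S_{h_i,k−1} with δ(H_i) ≥ k−1 and h_i ≥ 2k−1, F_i contains no path P_{2k}, and every vertex of F_i outside H_i has a neighbor in H_i. Then each F_i is a subgraph of S_{ν(F_i), k−1}, i.e., F_i has a set of k−1 vertices whose removal leaves an independent set. -/
open Finset

def interleave {α : Type*} : List α → List α → List α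
  | [], l => l
  | a :: l, l' => a :: interleave l' l
termination_by l l' => l.length + l'.length

lemma interleave_perm {α : Type*} : ∀ (l l' : List α), (interleave l l').Perm (l ++ l')
  | [], l' => by simp [interleave]
  | a :: l, l' => by
    simp only [interleave, List.cons_append]
    exact ((interleave_perm l' l).trans List.perm_append_comm).cons a
termination_by l l' => l.length + l'.length

lemma chain'_interleave {α : Type*} {R : α → α → Prop} :
    ∀ (li lj : List α), lj.length ≤ li.length → li.length ≤ lj.length + 1 →
    (∀ x ∈ li, ∀ y ∈ lj, R x y) → (∀ y ∈ lj, ∀ x ∈ li, R y x) →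
    List.Chain' R (interleave li lj)
  | [], [], _, _, _, _ => by simp [interleave, List.Chain', List.isChain_nil]
  | [], _ :: _, h1, _, _, _ => by simp at h1
  | [a], [], _, _, _, _ => by simp [interleave, List.Chain', List.isChain_singleton]
  | a :: b :: l, [], _, h2, _, _ => by simp at h2
  | a :: l, b :: lj', h1, h2, hR, hR' => by
    have hrec := chain'_interleave (b :: lj') l
        (by simp only [List.length_cons] at *; omega)
        (by simp only [List.length_cons] at *; omega)
        (fun y hy x hx => hR' y hy x (List.mem_cons_of_mem a hx))
        (fun x hx y hy => hR x (List.mem_cons_of_mem a hx) y hy)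
    simp only [interleave] at hrec ⊢
    exact List.isChain_cons_cons.mpr ⟨hR a (by simp) b (by simp), hrec⟩
termination_by li lj => li.length + lj.length

lemma hasPathOn_of_list {V : Type*} (G : SimpleGraph V) (n : ℕ) (l : List V)
    (hlen : l.length = n) (hnd : l.Nodup) (hch : List.Chain' G.Adj l) :
    HasPathOn G n := by
  subst hlen
  refine ⟨l.get, List.nodup_iff_injective_get.mp hnd, ?_⟩
  intro i h
  exact List.isChain_iff_getElem.mp hch i (by omega)

lemma path_core {V : Type*} [DecidableEq V] (G : SimpleGraph V) (x : V) (A B : Finset V)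
    (hx : x ∉ A) (hxB : ∀ b ∈ B, G.Adj x b)
    (hAB : ∀ a ∈ A, ∀ b ∈ B, G.Adj a b) (hd : Disjoint (insert x A) B)
    (h1 : B.card ≤ A.card + 1) (h2 : A.card ≤ B.card) :
    ∃ l : List V, l.length = A.card + B.card + 1 ∧ l.Nodup ∧
      List.Chain' G.Adj l ∧ l.head? = some x ∧ ∀ v ∈ l, v ∈ insert x A ∪ B := by
  have hperm := interleave_perm (x :: A.toList) B.toList
  refine ⟨interleave (x :: A.toList) B.toList, ?_, ?_, ?_, ?_, ?_⟩
  · rw [hperm.length_eq]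
    simp only [List.length_append, List.length_cons, Finset.length_toList]
    omega
  · rw [hperm.nodup_iff]
    rw [List.nodup_append]
    refine ⟨?_, B.nodup_toList, ?_⟩
    · exact List.nodup_cons.mpr ⟨by simpa using hx, A.nodup_toList⟩
    · intro v hv v' hv' hvv'
      subst hvv'
      have h1 : v ∈ insert x A := by
        rcases List.mem_cons.mp hv with h | h
        · simp [h]
        · simp [Finset.mem_toList.mp h]
      exact (Finset.disjoint_left.mp hd h1) (Finset.mem_toList.mp hv')
  · refine chain'_interleave _ _ ?_ ?_ ?_ ?_
    · simp only [List.length_cons, Finset.length_toList]; omega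
    · simp only [List.length_cons, Finset.length_toList]; omega
    · intro a ha b hb
      rcases List.mem_cons.mp ha with h | h
      · subst h; exact hxB b (Finset.mem_toList.mp hb)
      · exact hAB a (Finset.mem_toList.mp h) b (Finset.mem_toList.mp hb)
    · intro b hb a ha
      rcases List.mem_cons.mp ha with h | h
      · subst h; exact (hxB b (Finset.mem_toList.mp hb)).symm
      · exact (hAB a (Finset.mem_toList.mp h) b (Finset.mem_toList.mp hb)).symm
  · simp only [interleave, List.head?]
  · intro v hv
    have := hperm.mem_iff.mp hv
    rcases List.mem_append.mp this with h | h
    · rcases List.mem_cons.mp h with h | h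
      · simp [h]
      · simp [Finset.mem_toList.mp h]
    · simp [Finset.mem_toList.mp h]

lemma case1 {m k : ℕ} (hk : 3 ≤ k) (F : SimpleGraph (Fin m)) [DecidableRel F.Adj]
    (I J : Finset (Fin m)) (hdisj : Disjoint I J) (hJ : J.card = k - 1) (hI : k ≤ I.card)
    (hIJ : ∀ a ∈ I, ∀ b ∈ J, F.Adj a b)
    (a b : Fin m) (ha : a ∈ I) (hb : b ∉ I ∪ J) (hab : F.Adj b a) :
    HasPathOn F (2 * k) := by
  obtain ⟨I', hI'sub, hI'card⟩ := Finset.exists_subset_card_eq (s := I.erase a) (n := k - 1)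
      (by rw [Finset.card_erase_of_mem ha]; omega)
  have hI'I : I' ⊆ I := hI'sub.trans (Finset.erase_subset _ _)
  have hxA : a ∉ I' := fun h => (Finset.mem_erase.mp (hI'sub h)).1 rfl
  have hins : insert a I' ⊆ I := Finset.insert_subset ha hI'I
  obtain ⟨l, hlen, hnd, hch, hhead, hmem⟩ := path_core F a I' J hxA
      (hIJ a ha) (fun x hx => hIJ x (hI'I hx)) (hdisj.mono_left hins)
      (by omega) (by omega)
  refine hasPathOn_of_list F _ (b :: l) (by simp only [List.length_cons, hlen]; omega) ?_ ?_
  · refine List.nodup_cons.mpr ⟨?_, hnd⟩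
    intro hbl
    have hmb := hmem b hbl
    simp only [Finset.mem_union] at hmb hb
    rcases hmb with h | h
    · exact hb (Or.inl (hins h))
    · exact hb (Or.inr h)
  · rw [List.Chain', List.isChain_cons]
    refine ⟨?_, hch⟩
    intro c hc
    rw [hhead] at hc
    obtain rfl : a = c := by simpa using hc
    exact hab

lemma case2 {m k : ℕ} (hk : 3 ≤ k) (F : SimpleGraph (Fin m)) [DecidableRel F.Adj]
    (I J : Finset (Fin m)) (hdisj : Disjoint I J) (hJ : J.card = k - 1) (hI : k ≤ I.card)
    (hIJ : ∀ a ∈ I, ∀ b ∈ J, F.Adj a b)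
    (a b u : Fin m) (ha : a ∉ I ∪ J) (hb : b ∉ I ∪ J) (hab : F.Adj a b)
    (hu : u ∈ I ∪ J) (hbu : F.Adj b u) :
    HasPathOn F (2 * k) := by
  obtain ⟨l, hlen, hnd, hch, hhead, hmem⟩ :
      ∃ l : List (Fin m), l.length = 2 * k - 2 ∧ l.Nodup ∧ List.Chain' F.Adj l ∧
        l.head? = some u ∧ ∀ v ∈ l, v ∈ I ∪ J := by
    rcases Finset.mem_union.mp hu with huI | huJ
    · obtain ⟨I'', hsub, hcard⟩ := Finset.exists_subset_card_eq (s := I.erase u) (n := k - 2)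
        (by rw [Finset.card_erase_of_mem huI]; omega)
      have hI'I : I'' ⊆ I := hsub.trans (Finset.erase_subset _ _)
      have hins : insert u I'' ⊆ I := Finset.insert_subset huI hI'I
      obtain ⟨l, h1, h2, h3, h4, h5⟩ := path_core F u I'' J
        (fun h => (Finset.mem_erase.mp (hsub h)).1 rfl)
        (hIJ u huI) (fun x hx => hIJ x (hI'I hx)) (hdisj.mono_left hins)
        (by omega) (by omega)
      exact ⟨l, by omega, h2, h3, h4, fun v hv => by
        rcases Finset.mem_union.mp (h5 v hv) with h | h
        · exact Finset.mem_union_left _ (hins h)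
        · exact Finset.mem_union_right _ h⟩
    · obtain ⟨J'', hsub, hcard⟩ := Finset.exists_subset_card_eq (s := J.erase u) (n := k - 2)
        (by rw [Finset.card_erase_of_mem huJ]; omega)
      obtain ⟨I', hsubI, hcardI⟩ := Finset.exists_subset_card_eq (s := I) (n := k - 1) (by omega)
      have hJ'J : J'' ⊆ J := hsub.trans (Finset.erase_subset _ _)
      have hins : insert u J'' ⊆ J := Finset.insert_subset huJ hJ'J
      obtain ⟨l, h1, h2, h3, h4, h5⟩ := path_core F u J'' I'
        (fun h => (Finset.mem_erase.mp (hsub h)).1 rfl)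
        (fun x hx => (hIJ x (hsubI hx) u huJ).symm)
        (fun y hy x hx => (hIJ x (hsubI hx) y (hJ'J hy)).symm)
        (Disjoint.mono hins hsubI hdisj.symm)
        (by omega) (by omega)
      exact ⟨l, by omega, h2, h3, h4, fun v hv => by
        rcases Finset.mem_union.mp (h5 v hv) with h | h
        · exact Finset.mem_union_right _ (hins h)
        · exact Finset.mem_union_left _ (hsubI h)⟩
  refine hasPathOn_of_list F _ (a :: b :: l)
      (by simp only [List.length_cons, hlen]; omega) ?_ ?_
  · have hal : a ∉ l := fun h => ha (hmem a h)
    have hbl : b ∉ l := fun h => hb (hmem b h)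
    refine List.nodup_cons.mpr ⟨?_, List.nodup_cons.mpr ⟨hbl, hnd⟩⟩
    simp only [List.mem_cons]
    rintro (rfl | h)
    · exact hab.ne rfl
    · exact hal h
  · rw [List.Chain', List.isChain_cons_cons]
    refine ⟨hab, ?_⟩
    rw [List.isChain_cons]
    refine ⟨?_, hch⟩
    intro c hc
    rw [hhead] at hc
    obtain rfl : u = c := by simpa using hc
    exact hbu

theorem stmt19 {m k : ℕ} (hk : 3 ≤ k) (F : SimpleGraph (Fin m)) [DecidableRel F.Adj]
    (hconn : F.Connected) (I J : Finset (Fin m)) (hdisj : Disjoint I J)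
    (hJ : J.card = k - 1) (hh : 2 * k - 1 ≤ I.card + J.card)
    (hIJ : ∀ a ∈ I, ∀ b ∈ J, F.Adj a b)
    (hInd : ∀ a ∈ I, ∀ b ∈ I, ¬ F.Adj a b)
    (hδ : ∀ v ∈ I ∪ J, k - 1 ≤ ((I ∪ J).filter (F.Adj v)).card)
    (hP : ¬ HasPathOn F (2 * k))
    (hdomH : ∀ v, v ∉ I ∪ J → ∃ u ∈ I ∪ J, F.Adj v u) :
    ∃ K : Finset (Fin m), K.card = k - 1 ∧
      ∀ a b : Fin m, a ∉ K → b ∉ K → ¬ F.Adj a b := by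
  have hI : k ≤ I.card := by omega
  refine ⟨J, hJ, ?_⟩
  intro a b haJ hbJ hadj
  by_cases haI : a ∈ I
  · by_cases hbI : b ∈ I
    · exact hInd a haI b hbI hadj
    · have hb : b ∉ I ∪ J := by simp [Finset.mem_union, hbI, hbJ]
      exact hP (case1 hk F I J hdisj hJ hI hIJ a b haI hb hadj.symm)
  · have ha : a ∉ I ∪ J := by simp [Finset.mem_union, haI, haJ]
    by_cases hbI : b ∈ I
    · exact hP (case1 hk F I J hdisj hJ hI hIJ b a hbI ha hadj)
    · have hb : b ∉ I ∪ J := by simp [Finset.mem_union, hbI, hbJ]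
      obtain ⟨u, hu, hbu⟩ := hdomH b hb
      exact hP (case2 hk F I J hdisj hJ hI hIJ a b u ha hb hadj hu hbu)
end
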